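/- Let μ be a probability measure on ℝ with finite first moment and cdf F, not equal to a Dirac mass. Then for every N ≥ 1, N·e_N(μ,1) + (N+1)·e_{N+1}(μ,1) ≥ (1/2) ∫_ℝ min(F(x), 1−F(x)) dx, where the right-hand side is positive. Consequently limsup_{N→∞} N·e_N(μ,1) > 0. -/

import Mathlib

open MeasureTheory ProbabilityTheory Filter Set
open scoped Topology ENNReal

/-- Distance from `x` to the nearest nonnegative integer. -/
noncomputable def nnd (x : ℝ) : ℝ := ⨅ j : ℕ, |x - (j : ℝ)|

/-- Left-continuous quantile function of `μ`. -/
noncomputable def qf (μ : Measure ℝ) (u : ℝ) : ℝ := sInf {x : ℝ | u ≤ cdf μ x}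

section qfbasic
variable (μ : Measure ℝ) [IsProbabilityMeasure μ]
set_option linter.unusedSectionVars false
set_option linter.unusedVariables false

lemma qf_bddBelow {u : ℝ} (hu : 0 < u) : BddBelow {x : ℝ | u ≤ cdf μ x} := by
  have h0 : ∀ᶠ x in atBot, cdf μ x < u := (tendsto_cdf_atBot μ).eventually_lt_const hu
  obtain ⟨x₁, hx₁⟩ := eventually_atBot.1 h0
  refine ⟨x₁, fun x hx => ?_⟩
  by_contra h
  push_neg at h
  exact absurd (le_trans hx ((monotone_cdf μ) h.le)) (not_le.2 (hx₁ x₁ le_rfl))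

lemma qf_nonempty {u : ℝ} (hu : u < 1) : {x : ℝ | u ≤ cdf μ x}.Nonempty := by
  obtain ⟨x, hx⟩ := ((tendsto_cdf_atTop μ).eventually_const_lt hu).exists
  exact ⟨x, hx.le⟩

lemma qf_le_of_le_cdf {u y : ℝ} (hu : 0 < u) (h : u ≤ cdf μ y) : qf μ u ≤ y :=
  csInf_le (qf_bddBelow μ hu) h

lemma le_cdf_of_qf_le {u y : ℝ} (hu0 : 0 < u) (hu1 : u < 1) (h : qf μ u ≤ y) : u ≤ cdf μ y := by
  have hne := qf_nonempty μ hu1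
  have hcdfa : u ≤ cdf μ (qf μ u) := by
    have hev : ∀ᶠ x in 𝓝[>] (qf μ u), u ≤ cdf μ x := by
      filter_upwards [self_mem_nhdsWithin] with x (hx : qf μ u < x)
      obtain ⟨s, hs, hsx⟩ := exists_lt_of_csInf_lt hne hx
      exact le_trans hs ((monotone_cdf μ) hsx.le)
    have hc : Tendsto (cdf μ) (𝓝[>] (qf μ u)) (𝓝 (cdf μ (qf μ u))) :=
      ((cdf μ).right_continuous _).tendsto.mono_left (nhdsWithin_mono _ Ioi_subset_Ici_self)
    exact ge_of_tendsto hc hev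
  exact le_trans hcdfa ((monotone_cdf μ) h)

lemma qf_of_nonpos {u : ℝ} (hu : u ≤ 0) : qf μ u = 0 := by
  have h : {x : ℝ | u ≤ cdf μ x} = univ := eq_univ_of_forall (fun x => le_trans hu (cdf_nonneg μ x))
  have hnb : ¬ BddBelow {x : ℝ | u ≤ cdf μ x} := by
    rw [h]; exact fun ⟨c, hc⟩ => absurd (hc (mem_univ (c - 1))) (by simp)
  rw [qf]; exact Real.sInf_of_not_bddBelow hnb

lemma qf_of_one_lt {u : ℝ} (hu : 1 < u) : qf μ u = 0 := by
  have h : {x : ℝ | u ≤ cdf μ x} = ∅ := by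
    ext x; simp only [mem_setOf_eq, mem_empty_iff_false, iff_false, not_le]
    exact lt_of_le_of_lt (cdf_le_one μ x) hu
  rw [qf, h]; exact Real.sInf_empty

lemma qf_monotoneOn : MonotoneOn (qf μ) (Ioo (0:ℝ) 1) := by
  intro u hu v hv huv
  exact qf_le_of_le_cdf μ hu.1 (le_trans huv (le_cdf_of_qf_le μ hv.1 hv.2 le_rfl))

lemma qf_measurable : Measurable (qf μ) := by
  apply measurable_of_Iic
  intro y
  have hdecomp : qf μ ⁻¹' Iic y =
      ((Ioo (0:ℝ) 1) ∩ qf μ ⁻¹' Iic y) ∪ ((Iic (0:ℝ) ∪ Ioi 1) ∩ {u : ℝ | (0:ℝ) ≤ y}) ∪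
        ({1} ∩ {u : ℝ | qf μ 1 ≤ y}) := by
    ext u
    simp only [mem_preimage, mem_Iic, mem_union, mem_inter_iff, mem_Ioo, mem_setOf_eq,
      mem_singleton_iff, mem_Ioi]
    constructor
    · intro h
      rcases lt_trichotomy u 0 with h0 | h0 | h0
      · exact Or.inl (Or.inr ⟨Or.inl h0.le, by rwa [qf_of_nonpos μ h0.le] at h⟩)
      · exact Or.inl (Or.inr ⟨Or.inl h0.le, by rwa [h0, qf_of_nonpos μ le_rfl] at h⟩)
      · rcases lt_trichotomy u 1 with h1 | h1 | h1
        · exact Or.inl (Or.inl ⟨⟨h0, h1⟩, h⟩)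
        · exact Or.inr ⟨h1, h1 ▸ h⟩
        · exact Or.inl (Or.inr ⟨Or.inr h1, by rwa [qf_of_one_lt μ h1] at h⟩)
    · rintro ((⟨_, h⟩ | ⟨h01, hy⟩) | ⟨h1, hy⟩)
      · exact h
      · rcases h01 with h0 | h1
        · rw [qf_of_nonpos μ h0]; exact hy
        · rw [qf_of_one_lt μ h1]; exact hy
      · rw [h1]; exact hy
  rw [hdecomp]
  have h1 : MeasurableSet ((Ioo (0:ℝ) 1) ∩ qf μ ⁻¹' Iic y) := by
    refine Set.OrdConnected.measurableSet ⟨fun a ha b hb c hc => ?_⟩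
    refine ⟨ordConnected_Ioo.out ha.1 hb.1 hc, ?_⟩
    have : qf μ c ≤ qf μ b := qf_monotoneOn μ (ordConnected_Ioo.out ha.1 hb.1 hc) hb.1 hc.2
    exact this.trans hb.2
  have hc : ∀ c : ℝ, MeasurableSet {u : ℝ | c ≤ y} := by
    intro c
    by_cases h : c ≤ y
    · simp only [h, setOf_true]; exact MeasurableSet.univ
    · simp only [h, setOf_false]; exact MeasurableSet.empty
  exact (h1.union (((measurableSet_Iic.union measurableSet_Ioi).inter (hc 0)))).union
    ((measurableSet_singleton 1).inter (hc _))
end qfbasic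

section qfmap
variable (μ : Measure ℝ) [IsProbabilityMeasure μ]
set_option linter.unusedSectionVars false

lemma qf_map : Measure.map (qf μ) (volume.restrict (Ioo (0:ℝ) 1)) = μ := by
  have hfin : IsFiniteMeasure (Measure.map (qf μ) (volume.restrict (Ioo (0:ℝ) 1))) := by
    constructor
    rw [Measure.map_apply (qf_measurable μ) MeasurableSet.univ]
    simp [Real.volume_Ioo]
  refine @Measure.ext_of_Iic ℝ _ _ _ _ _ _ _ _ hfin (fun y => ?_)
  rw [Measure.map_apply (qf_measurable μ) measurableSet_Iic]
  have hset : qf μ ⁻¹' Iic y ∩ Ioo 0 1 = {u : ℝ | u ∈ Ioo (0:ℝ) 1 ∧ u ≤ cdf μ y} := by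
    ext u
    simp only [mem_inter_iff, mem_preimage, mem_Iic, mem_Ioo, mem_setOf_eq]
    constructor
    · rintro ⟨h, h0, h1⟩; exact ⟨⟨h0, h1⟩, le_cdf_of_qf_le μ h0 h1 h⟩
    · rintro ⟨⟨h0, h1⟩, h⟩; exact ⟨qf_le_of_le_cdf μ h0 h, h0, h1⟩
  rw [Measure.restrict_apply (measurableSet_preimage (qf_measurable μ) measurableSet_Iic), hset,
    ← ofReal_cdf μ y]
  rcases lt_or_ge (cdf μ y) 1 with h1 | h1
  · have : {u : ℝ | u ∈ Ioo (0:ℝ) 1 ∧ u ≤ cdf μ y} = Ioc 0 (cdf μ y) := by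
      ext u
      simp only [mem_setOf_eq, mem_Ioo, mem_Ioc]
      exact ⟨fun ⟨⟨h0, _⟩, h⟩ => ⟨h0, h⟩, fun ⟨h0, h⟩ => ⟨⟨h0, lt_of_le_of_lt h h1⟩, h⟩⟩
    rw [this, Real.volume_Ioc, sub_zero]
  · have h1' : cdf μ y = 1 := le_antisymm (cdf_le_one μ y) h1
    have : {u : ℝ | u ∈ Ioo (0:ℝ) 1 ∧ u ≤ cdf μ y} = Ioo 0 1 := by
      ext u
      simp only [mem_setOf_eq, mem_Ioo, h1']
      exact ⟨fun ⟨h, _⟩ => h, fun h => ⟨h, h.2.le⟩⟩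
    rw [this, Real.volume_Ioo, h1']
    norm_num

lemma qf_integrable (hmom : Integrable (fun x : ℝ => |x|) μ) :
    Integrable (qf μ) (volume.restrict (Ioc (0:ℝ) 1)) := by
  have hid : Integrable (fun x : ℝ => x) μ :=
    hmom.mono' measurable_id.aestronglyMeasurable (Eventually.of_forall (fun x => by simp))
  have h1 : Integrable (fun x : ℝ => x) (Measure.map (qf μ) (volume.restrict (Ioo (0:ℝ) 1))) := by
    rw [qf_map μ]; exact hid
  have h2 : Integrable (qf μ) (volume.restrict (Ioo (0:ℝ) 1)) :=
    h1.comp_aemeasurable (qf_measurable μ).aemeasurable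
  rwa [Measure.restrict_congr_set Ioo_ae_eq_Ioc] at h2
end qfmap

lemma nnd_nonneg (x : ℝ) : 0 ≤ nnd x :=
  Real.iInf_nonneg (fun j => abs_nonneg _)

lemma nnd_bddBelow (x : ℝ) : BddBelow (Set.range (fun j : ℕ => |x - (j:ℝ)|)) :=
  ⟨0, by rintro r ⟨j, rfl⟩; exact abs_nonneg _⟩

lemma nnd_le (x : ℝ) (j : ℕ) : nnd x ≤ |x - (j:ℝ)| := ciInf_le (nnd_bddBelow x) j

lemma nnd_pair {v : ℝ} (h0 : 0 ≤ v) (h1 : v ≤ 1) (N : ℕ) :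
    min v (1 - v) ≤ 2 * (nnd ((N:ℝ) * v) + nnd (((N:ℝ) + 1) * v)) := by
  by_contra hcon
  push_neg at hcon
  have ha : nnd ((N:ℝ) * v) < min v (1 - v) / 2 := by
    have := nnd_nonneg (((N:ℝ) + 1) * v); linarith
  have hb : nnd (((N:ℝ) + 1) * v) < min v (1 - v) / 2 := by
    have := nnd_nonneg ((N:ℝ) * v); linarith
  obtain ⟨j, hj⟩ := exists_lt_of_ciInf_lt ha
  obtain ⟨k, hk⟩ := exists_lt_of_ciInf_lt hb
  have hd : |v - ((k:ℝ) - (j:ℝ))| < min v (1 - v) := by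
    have : v - ((k:ℝ) - (j:ℝ)) = (((N:ℝ) + 1) * v - k) - ((N:ℝ) * v - j) := by ring
    rw [this]
    calc |(((N:ℝ) + 1) * v - k) - ((N:ℝ) * v - j)| ≤
        |((N:ℝ) + 1) * v - k| + |(N:ℝ) * v - j| := abs_sub _ _
      _ < min v (1 - v) / 2 + min v (1 - v) / 2 := add_lt_add hk hj
      _ = min v (1 - v) := by ring
  rcases le_or_gt (k:ℤ) (j:ℤ) with h | h
  · have hle : (k:ℝ) - (j:ℝ) ≤ 0 := by
      have : (k:ℝ) ≤ (j:ℝ) := by exact_mod_cast h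
      linarith
    have : v ≤ |v - ((k:ℝ) - (j:ℝ))| := le_trans (by linarith) (le_abs_self _)
    have := min_le_left v (1 - v)
    linarith
  · have hge : (1:ℝ) ≤ (k:ℝ) - (j:ℝ) := by
      have : (j:ℤ) + 1 ≤ (k:ℤ) := h
      have h2 : (j:ℝ) + 1 ≤ (k:ℝ) := by exact_mod_cast this
      linarith
    have : 1 - v ≤ |v - ((k:ℝ) - (j:ℝ))| := by
      rw [abs_sub_comm]
      exact le_trans (by linarith) (le_abs_self _)
    have := min_le_right v (1 - v)
    linarith

section keyA
variable (μ : Measure ℝ) [IsProbabilityMeasure μ]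
set_option linter.unusedSectionVars false

lemma keyA (N : ℕ) (hN : 1 ≤ N) (x : Fin N → ℝ) :
    ∫⁻ y, ENNReal.ofReal (nnd ((N:ℝ) * cdf μ y)) ≤
      (N : ℝ≥0∞) * ∑ i : Fin N, ∫⁻ u in Ioc ((i:ℝ)/(N:ℝ)) (((i:ℝ)+1)/(N:ℝ)),
        ENNReal.ofReal |x i - qf μ u| := by
  have hNpos : (0:ℝ) < N := by exact_mod_cast hN
  set M : Fin N → Set (ℝ × ℝ) := fun i =>
    {p : ℝ × ℝ | p.1 ∈ Ioo ((i:ℝ)/(N:ℝ)) (((i:ℝ)+1)/(N:ℝ)) ∧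
      ((qf μ p.1 ≤ p.2 ∧ p.2 < x i) ∨ (x i ≤ p.2 ∧ p.2 < qf μ p.1))} with hM
  have hMmeas : ∀ i, MeasurableSet (M i) := by
    intro i
    apply MeasurableSet.inter
    · exact measurable_fst measurableSet_Ioo
    · apply MeasurableSet.union
      · exact ((measurableSet_le ((qf_measurable μ).comp measurable_fst) measurable_snd).inter
          (measurableSet_lt measurable_snd measurable_const))
      · exact ((measurableSet_le measurable_const measurable_snd).inter
          (measurableSet_lt measurable_snd ((qf_measurable μ).comp measurable_fst)))
  -- Step 1: Fubini bound per i
  have step1 : ∀ i : Fin N,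
      ∫⁻ y, volume ((fun u => (u, y)) ⁻¹' M i) ≤
        ∫⁻ u in Ioc ((i:ℝ)/(N:ℝ)) (((i:ℝ)+1)/(N:ℝ)), ENNReal.ofReal |x i - qf μ u| := by
    intro i
    set a := (i:ℝ)/(N:ℝ) with ha
    set b := ((i:ℝ)+1)/(N:ℝ) with hb
    have hindm : Measurable ((M i).indicator (fun _ : ℝ × ℝ => (1:ℝ≥0∞))) :=
      measurable_const.indicator (hMmeas i)
    have hsec : ∀ y, volume ((fun u => (u, y)) ⁻¹' M i) =
        ∫⁻ u, (M i).indicator (fun _ => (1:ℝ≥0∞)) (u, y) := by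
      intro y
      have hms : MeasurableSet ((fun u => (u, y)) ⁻¹' M i) :=
        (hMmeas i).preimage measurable_prodMk_right
      rw [← lintegral_indicator_one hms]
      refine lintegral_congr fun u => ?_
      by_cases h : (u, y) ∈ M i <;>
        simp [Set.indicator_apply, Set.mem_preimage, h]
    have hswap : ∫⁻ y, ∫⁻ u, (M i).indicator (fun _ => (1:ℝ≥0∞)) (u, y) =
        ∫⁻ u, ∫⁻ y, (M i).indicator (fun _ => (1:ℝ≥0∞)) (u, y) := by
      refine (lintegral_lintegral_swap ?_).symm
      exact hindm.aemeasurable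
    have hinner : ∀ u, ∫⁻ y, (M i).indicator (fun _ => (1:ℝ≥0∞)) (u, y) =
        (Ioo a b).indicator (fun u => ENNReal.ofReal |x i - qf μ u|) u := by
      intro u
      have hsecy : ∫⁻ y, (M i).indicator (fun _ => (1:ℝ≥0∞)) (u, y) =
          volume {y : ℝ | (u, y) ∈ M i} := by
        have hms : MeasurableSet {y : ℝ | (u, y) ∈ M i} :=
          (hMmeas i).preimage measurable_prodMk_left
        rw [← lintegral_indicator_one hms]
        refine lintegral_congr fun y => ?_
        by_cases h : (u, y) ∈ M i <;>
          simp [Set.indicator_apply, Set.mem_preimage, h]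
      rw [hsecy]
      by_cases hu : u ∈ Ioo a b
      · rcases le_or_gt (qf μ u) (x i) with hle | hlt
        · have hset : {y : ℝ | (u, y) ∈ M i} = Ico (qf μ u) (x i) := by
            ext y
            simp only [hM, mem_setOf_eq, mem_Ico]
            constructor
            · rintro ⟨_, (⟨h1, h2⟩ | ⟨h1, h2⟩)⟩
              · exact ⟨h1, h2⟩
              · exact absurd (lt_of_lt_of_le h2 hle) (not_lt.2 h1)
            · rintro ⟨h1, h2⟩; exact ⟨hu, Or.inl ⟨h1, h2⟩⟩
          rw [hset, Real.volume_Ico, Set.indicator_of_mem hu,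
            abs_of_nonneg (sub_nonneg.2 hle)]
        · have hset : {y : ℝ | (u, y) ∈ M i} = Ico (x i) (qf μ u) := by
            ext y
            simp only [hM, mem_setOf_eq, mem_Ico]
            constructor
            · rintro ⟨_, (⟨h1, h2⟩ | ⟨h1, h2⟩)⟩
              · exact absurd (lt_trans h2 hlt) (not_lt.2 h1)
              · exact ⟨h1, h2⟩
            · rintro ⟨h1, h2⟩; exact ⟨hu, Or.inr ⟨h1, h2⟩⟩
          rw [hset, Real.volume_Ico, Set.indicator_of_mem hu, abs_sub_comm,
            abs_of_nonneg (sub_nonneg.2 hlt.le)]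
      · have hset : {y : ℝ | (u, y) ∈ M i} = ∅ := by
          ext y
          simp only [hM, mem_setOf_eq, mem_empty_iff_false, iff_false, not_and]
          exact fun h => absurd h hu
        rw [hset, Set.indicator_of_notMem hu]
        simp
    calc ∫⁻ y, volume ((fun u => (u, y)) ⁻¹' M i)
        = ∫⁻ u, ∫⁻ y, (M i).indicator (fun _ => (1:ℝ≥0∞)) (u, y) := by
          rw [lintegral_congr hsec, hswap]
      _ = ∫⁻ u, (Ioo a b).indicator (fun u => ENNReal.ofReal |x i - qf μ u|) u :=
          lintegral_congr hinner
      _ = ∫⁻ u in Ioo a b, ENNReal.ofReal |x i - qf μ u| :=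
          lintegral_indicator measurableSet_Ioo _
      _ ≤ ∫⁻ u in Ioc a b, ENNReal.ofReal |x i - qf μ u| :=
          lintegral_mono_set Ioo_subset_Ioc_self
  -- Step 2: pointwise lower bound
  have step2 : ∀ y : ℝ,
      ENNReal.ofReal (nnd ((N:ℝ) * cdf μ y)) ≤
        (N : ℝ≥0∞) * ∑ i : Fin N, volume ((fun u => (u, y)) ⁻¹' M i) := by
    intro y
    set v := cdf μ y with hvdef
    have hv0 : 0 ≤ v := cdf_nonneg μ y
    have hv1 : v ≤ 1 := cdf_le_one μ y
    have hNv0 : 0 ≤ (N:ℝ) * v := by positivity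
    set k : ℕ := min (Nat.floor ((N:ℝ) * v)) (N - 1) with hkdef
    have hkN : k < N := lt_of_le_of_lt (min_le_right _ _) (by omega)
    set i₀ : Fin N := ⟨k, hkN⟩ with hi₀
    have hcast : ((i₀ : Fin N) : ℝ) = (k : ℝ) := by norm_cast
    have hlow : (k:ℝ) ≤ (N:ℝ) * v := by
      rcases le_or_gt (Nat.floor ((N:ℝ)*v)) (N-1) with h | h
      · have hke : k = Nat.floor ((N:ℝ)*v) := min_eq_left h
        rw [hke]; exact Nat.floor_le hNv0
      · have hke : k = N - 1 := min_eq_right h.le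
        have h1 : (N:ℝ) ≤ Nat.floor ((N:ℝ)*v) := by
          have : N ≤ Nat.floor ((N:ℝ)*v) := by omega
          exact_mod_cast this
        have h2 : ((Nat.floor ((N:ℝ)*v)):ℝ) ≤ (N:ℝ)*v := Nat.floor_le hNv0
        have h3 : ((k:ℕ):ℝ) = (N:ℝ) - 1 := by
          rw [hke]; push_cast [Nat.cast_sub hN]; ring
        linarith
    have hhigh : (N:ℝ) * v ≤ (k:ℝ) + 1 := by
      rcases le_or_gt (Nat.floor ((N:ℝ)*v)) (N-1) with h | h
      · have hke : k = Nat.floor ((N:ℝ)*v) := min_eq_left h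
        rw [hke]
        exact (Nat.lt_floor_add_one _).le
      · have hke : k = N - 1 := min_eq_right h.le
        have h3 : ((k:ℕ):ℝ) = (N:ℝ) - 1 := by
          rw [hke]; push_cast [Nat.cast_sub hN]; ring
        nlinarith
    have hva : (k:ℝ)/(N:ℝ) ≤ v := by
      rw [div_le_iff₀ hNpos]; linarith
    have hvb : v ≤ ((k:ℝ)+1)/(N:ℝ) := by
      rw [le_div_iff₀ hNpos]; linarith
    have ha0 : 0 ≤ (k:ℝ)/(N:ℝ) := by positivity
    have hb1 : ((k:ℝ)+1)/(N:ℝ) ≤ 1 := by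
      rw [div_le_one hNpos]
      have : (k:ℝ) + 1 ≤ (N:ℝ) := by exact_mod_cast hkN
      linarith
    have hsum : volume ((fun u => (u, y)) ⁻¹' M i₀) ≤
        ∑ i : Fin N, volume ((fun u => (u, y)) ⁻¹' M i) :=
      Finset.single_le_sum (f := fun i => volume ((fun u => (u, y)) ⁻¹' M i))
        (fun i _ => zero_le) (Finset.mem_univ i₀)
    have hmain : ENNReal.ofReal (nnd ((N:ℝ) * v)) ≤
        (N : ℝ≥0∞) * volume ((fun u => (u, y)) ⁻¹' M i₀) := by
      have hNreal : (N : ℝ≥0∞) = ENNReal.ofReal (N:ℝ) := by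
        rw [ENNReal.ofReal_natCast]
      rcases le_or_gt (x i₀) y with hxy | hxy
      · -- x i₀ ≤ y : use right part, Ioo v ((k+1)/N)
        have hsub : Ioo v (((k:ℝ)+1)/(N:ℝ)) ⊆ (fun u => (u, y)) ⁻¹' M i₀ := by
          intro u hu
          have hu0 : 0 < u := lt_of_le_of_lt hv0 hu.1
          have hu1 : u < 1 := lt_of_lt_of_le hu.2 hb1
          refine ⟨⟨?_, ?_⟩, Or.inr ⟨hxy, ?_⟩⟩
          · rw [hcast]; exact lt_of_le_of_lt hva hu.1
          · rw [hcast]; exact hu.2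
          · by_contra h
            push_neg at h
            exact absurd (le_cdf_of_qf_le μ hu0 hu1 h) (not_le.2 hu.1)
        have hvol : ENNReal.ofReal (((k:ℝ)+1)/(N:ℝ) - v) ≤
            volume ((fun u => (u, y)) ⁻¹' M i₀) := by
          rw [← Real.volume_Ioo]
          exact measure_mono hsub
        have hnnd : nnd ((N:ℝ)*v) ≤ (N:ℝ) * (((k:ℝ)+1)/(N:ℝ) - v) := by
          have h1 : nnd ((N:ℝ)*v) ≤ |(N:ℝ)*v - ((k+1:ℕ):ℝ)| := nnd_le _ (k+1)
          have h2 : |(N:ℝ)*v - ((k+1:ℕ):ℝ)| = (k:ℝ) + 1 - (N:ℝ)*v := by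
            rw [abs_of_nonpos (by push_cast; linarith)]
            push_cast; ring
          have h3 : (N:ℝ) * (((k:ℝ)+1)/(N:ℝ) - v) = (k:ℝ) + 1 - (N:ℝ)*v := by
            field_simp
            try ring
          linarith
        calc ENNReal.ofReal (nnd ((N:ℝ) * v))
            ≤ ENNReal.ofReal ((N:ℝ) * (((k:ℝ)+1)/(N:ℝ) - v)) := ENNReal.ofReal_le_ofReal hnnd
          _ = ENNReal.ofReal (N:ℝ) * ENNReal.ofReal (((k:ℝ)+1)/(N:ℝ) - v) :=
              ENNReal.ofReal_mul (by positivity)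
          _ ≤ (N : ℝ≥0∞) * volume ((fun u => (u, y)) ⁻¹' M i₀) := by
              rw [hNreal]; exact mul_le_mul_right hvol _
      · -- y < x i₀ : use left part, Ioo (k/N) v
        have hsub : Ioo ((k:ℝ)/(N:ℝ)) v ⊆ (fun u => (u, y)) ⁻¹' M i₀ := by
          intro u hu
          have hu0 : 0 < u := lt_of_le_of_lt ha0 hu.1
          refine ⟨⟨?_, ?_⟩, Or.inl ⟨?_, hxy⟩⟩
          · rw [hcast]; exact hu.1
          · rw [hcast]; exact lt_of_lt_of_le hu.2 hvb
          · exact qf_le_of_le_cdf μ hu0 hu.2.le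
        have hvol : ENNReal.ofReal (v - (k:ℝ)/(N:ℝ)) ≤
            volume ((fun u => (u, y)) ⁻¹' M i₀) := by
          rw [← Real.volume_Ioo]
          exact measure_mono hsub
        have hnnd : nnd ((N:ℝ)*v) ≤ (N:ℝ) * (v - (k:ℝ)/(N:ℝ)) := by
          have h1 : nnd ((N:ℝ)*v) ≤ |(N:ℝ)*v - (k:ℝ)| := nnd_le _ k
          have h2 : |(N:ℝ)*v - (k:ℝ)| = (N:ℝ)*v - (k:ℝ) := abs_of_nonneg (by linarith)
          have h3 : (N:ℝ) * (v - (k:ℝ)/(N:ℝ)) = (N:ℝ)*v - (k:ℝ) := by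
            field_simp
            try ring
          linarith
        calc ENNReal.ofReal (nnd ((N:ℝ) * v))
            ≤ ENNReal.ofReal ((N:ℝ) * (v - (k:ℝ)/(N:ℝ))) := ENNReal.ofReal_le_ofReal hnnd
          _ = ENNReal.ofReal (N:ℝ) * ENNReal.ofReal (v - (k:ℝ)/(N:ℝ)) :=
              ENNReal.ofReal_mul (by positivity)
          _ ≤ (N : ℝ≥0∞) * volume ((fun u => (u, y)) ⁻¹' M i₀) := by
              rw [hNreal]; exact mul_le_mul_right hvol _
    exact le_trans hmain (mul_le_mul_right hsum _)
  calc ∫⁻ y, ENNReal.ofReal (nnd ((N:ℝ) * cdf μ y))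
      ≤ ∫⁻ y, (N : ℝ≥0∞) * ∑ i : Fin N, volume ((fun u => (u, y)) ⁻¹' M i) :=
        lintegral_mono step2
    _ = (N : ℝ≥0∞) * ∫⁻ y, ∑ i : Fin N, volume ((fun u => (u, y)) ⁻¹' M i) :=
        lintegral_const_mul' _ _ (by simp)
    _ = (N : ℝ≥0∞) * ∑ i : Fin N, ∫⁻ y, volume ((fun u => (u, y)) ⁻¹' M i) := by
        rw [lintegral_finset_sum]
        intro i _
        exact measurable_measure_prodMk_right (hMmeas i)
    _ ≤ _ := mul_le_mul_right (Finset.sum_le_sum (fun i _ => step1 i)) _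
end keyA

lemma nnd_measurable : Measurable nnd := by
  have hlip : LipschitzWith 1 nnd := by
    refine LipschitzWith.of_dist_le_mul (fun p q => ?_)
    rw [Real.dist_eq, Real.dist_eq, NNReal.coe_one, one_mul]
    have key : ∀ p q : ℝ, nnd p ≤ nnd q + |p - q| := by
      intro p q
      have : ∀ j : ℕ, nnd p - |p - q| ≤ |q - (j:ℝ)| := by
        intro j
        have h1 : nnd p ≤ |p - (j:ℝ)| := nnd_le p j
        have h2 : |p - (j:ℝ)| ≤ |q - (j:ℝ)| + |p - q| := by
          calc |p - (j:ℝ)| = |(q - (j:ℝ)) + (p - q)| := by ring_nf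
            _ ≤ |q - (j:ℝ)| + |p - q| := abs_add_le _ _
        linarith
      have h : nnd p - |p - q| ≤ nnd q := le_ciInf this
      linarith
    rw [abs_sub_le_iff]
    constructor
    · have := key p q; linarith
    · have := key q p; rw [abs_sub_comm] at this; linarith
  exact hlip.continuous.measurable

section master
variable (μ : Measure ℝ) [IsProbabilityMeasure μ]
set_option linter.unusedSectionVars false

lemma lint_finite (hmom : Integrable (fun x : ℝ => |x|) μ) {a b : ℝ} (ha : 0 ≤ a) (hb : b ≤ 1)
    (c : ℝ) : ∫⁻ u in Ioc a b, ENNReal.ofReal |c - qf μ u| ≠ ⊤ := by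
  have hsub : Ioc a b ⊆ Ioc 0 1 := Ioc_subset_Ioc ha hb
  have h1 : ∫⁻ u in Ioc a b, ENNReal.ofReal |c - qf μ u| ≤
      ∫⁻ u in Ioc (0:ℝ) 1, ENNReal.ofReal |c - qf μ u| := lintegral_mono_set hsub
  have h2 : ∫⁻ u in Ioc (0:ℝ) 1, ENNReal.ofReal |c - qf μ u| ≤
      ∫⁻ u in Ioc (0:ℝ) 1, (ENNReal.ofReal |c| + ENNReal.ofReal |qf μ u|) := by
    refine lintegral_mono (fun u => ?_)
    rw [← ENNReal.ofReal_add (abs_nonneg _) (abs_nonneg _)]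
    exact ENNReal.ofReal_le_ofReal ((abs_sub _ _).trans_eq rfl)
  have h3 : ∫⁻ u in Ioc (0:ℝ) 1, (ENNReal.ofReal |c| + ENNReal.ofReal |qf μ u|) =
      (∫⁻ _ in Ioc (0:ℝ) 1, ENNReal.ofReal |c|) +
        ∫⁻ u in Ioc (0:ℝ) 1, ENNReal.ofReal |qf μ u| := by
    rw [lintegral_add_left measurable_const]
  have h4 : (∫⁻ _ in Ioc (0:ℝ) 1, ENNReal.ofReal |c|) ≠ ⊤ := by
    rw [lintegral_const]
    exact ENNReal.mul_ne_top ENNReal.ofReal_ne_top (by simp [Real.volume_Ioc])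
  have h5 : (∫⁻ u in Ioc (0:ℝ) 1, ENNReal.ofReal |qf μ u|) ≠ ⊤ := by
    have hint := (qf_integrable μ hmom).hasFiniteIntegral
    rw [HasFiniteIntegral] at hint
    have : ∀ u : ℝ, ENNReal.ofReal |qf μ u| = (‖qf μ u‖₊ : ℝ≥0∞) := by
      intro u
      rw [← enorm_eq_nnnorm, ← ofReal_norm, Real.norm_eq_abs]
    simp_rw [this]
    exact hint.ne
  intro htop
  rw [htop] at h1
  exact absurd (eq_top_iff.2 (h1.trans (h2.trans h3.le))) (ENNReal.add_ne_top.2 ⟨h4, h5⟩)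
end master

section master2
variable (μ : Measure ℝ) [IsProbabilityMeasure μ]
set_option linter.unusedSectionVars false

lemma fin_bounds (N : ℕ) (hN : 1 ≤ N) (i : Fin N) :
    0 ≤ (i:ℝ)/(N:ℝ) ∧ ((i:ℝ)+1)/(N:ℝ) ≤ 1 := by
  have hNpos : (0:ℝ) < N := by exact_mod_cast hN
  constructor
  · positivity
  · rw [div_le_one hNpos]
    have : ((i:ℕ):ℝ) + 1 ≤ (N:ℝ) := by exact_mod_cast i.isLt
    exact this

lemma lint_sum_finite (hmom : Integrable (fun x : ℝ => |x|) μ) (N : ℕ) (hN : 1 ≤ N)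
    (x : Fin N → ℝ) :
    (∑ i : Fin N, ∫⁻ u in Ioc ((i:ℝ)/(N:ℝ)) (((i:ℝ)+1)/(N:ℝ)),
      ENNReal.ofReal |x i - qf μ u|) ≠ ⊤ := by
  rw [← lt_top_iff_ne_top]
  rw [ENNReal.sum_lt_top]
  intro i _
  rw [lt_top_iff_ne_top]
  exact lint_finite μ hmom (fin_bounds N hN i).1 (fin_bounds N hN i).2 (x i)

lemma real_sum_eq (hmom : Integrable (fun x : ℝ => |x|) μ) (N : ℕ) (hN : 1 ≤ N)
    (x : Fin N → ℝ) :
    ∑ i : Fin N, ∫ u in Ioc ((i:ℝ)/(N:ℝ)) (((i:ℝ)+1)/(N:ℝ)), |x i - qf μ u| =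
      (∑ i : Fin N, ∫⁻ u in Ioc ((i:ℝ)/(N:ℝ)) (((i:ℝ)+1)/(N:ℝ)),
        ENNReal.ofReal |x i - qf μ u|).toReal := by
  rw [ENNReal.toReal_sum (fun i _ =>
    lint_finite μ hmom (fin_bounds N hN i).1 (fin_bounds N hN i).2 (x i))]
  refine Finset.sum_congr rfl (fun i _ => ?_)
  rw [integral_eq_lintegral_of_nonneg_ae (f := fun u => |x i - qf μ u|) (Eventually.of_forall (fun u => abs_nonneg _))
    ((measurable_const.sub (qf_measurable μ)).abs.aestronglyMeasurable)]

lemma master (hmom : Integrable (fun x : ℝ => |x|) μ) (N : ℕ) (hN : 1 ≤ N)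
    (x : Fin N → ℝ) (x' : Fin (N+1) → ℝ) :
    (1/2) * ∫ y : ℝ, min (cdf μ y) (1 - cdf μ y) ≤
      (N:ℝ) * (∑ i : Fin N, ∫ u in Ioc ((i:ℝ)/(N:ℝ)) (((i:ℝ)+1)/(N:ℝ)), |x i - qf μ u|) +
      ((N+1:ℕ):ℝ) * (∑ i : Fin (N+1),
        ∫ u in Ioc ((i:ℝ)/((N+1:ℕ):ℝ)) (((i:ℝ)+1)/((N+1:ℕ):ℝ)), |x' i - qf μ u|) := by
  set L : ℝ≥0∞ := ∑ i : Fin N, ∫⁻ u in Ioc ((i:ℝ)/(N:ℝ)) (((i:ℝ)+1)/(N:ℝ)),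
    ENNReal.ofReal |x i - qf μ u| with hL
  set L' : ℝ≥0∞ := ∑ i : Fin (N+1), ∫⁻ u in Ioc ((i:ℝ)/((N+1:ℕ):ℝ)) (((i:ℝ)+1)/((N+1:ℕ):ℝ)),
    ENNReal.ofReal |x' i - qf μ u| with hL'
  have hLfin : L ≠ ⊤ := lint_sum_finite μ hmom N hN x
  have hL'fin : L' ≠ ⊤ := lint_sum_finite μ hmom (N+1) (by omega) x'
  have hA := keyA μ N hN x
  have hB := keyA μ (N+1) (by omega) x'
  set T : ℝ≥0∞ := (N : ℝ≥0∞) * L + ((N+1:ℕ) : ℝ≥0∞) * L' with hT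
  have hTfin : T ≠ ⊤ := by
    refine ENNReal.add_ne_top.2 ⟨?_, ?_⟩ <;>
      exact ENNReal.mul_ne_top (ENNReal.natCast_ne_top _) (by assumption)
  set K : ℝ≥0∞ := ∫⁻ y, ENNReal.ofReal (min (cdf μ y) (1 - cdf μ y)) with hK
  have hmeasA : Measurable (fun y => ENNReal.ofReal (nnd ((N:ℝ) * cdf μ y))) :=
    ENNReal.measurable_ofReal.comp (nnd_measurable.comp (measurable_const.mul (monotone_cdf μ).measurable))
  have hKbound : K ≤ 2 * T := by
    have hpt : ∀ y : ℝ, ENNReal.ofReal (min (cdf μ y) (1 - cdf μ y)) ≤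
        2 * (ENNReal.ofReal (nnd ((N:ℝ) * cdf μ y)) +
          ENNReal.ofReal (nnd (((N+1:ℕ):ℝ) * cdf μ y))) := by
      intro y
      have h := nnd_pair (cdf_nonneg μ y) (cdf_le_one μ y) N
      have hcast : ((N:ℝ) + 1) = ((N+1:ℕ):ℝ) := by push_cast; ring
      rw [hcast] at h
      calc ENNReal.ofReal (min (cdf μ y) (1 - cdf μ y))
          ≤ ENNReal.ofReal (2 * (nnd ((N:ℝ) * cdf μ y) + nnd (((N+1:ℕ):ℝ) * cdf μ y))) :=
            ENNReal.ofReal_le_ofReal h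
        _ = ENNReal.ofReal 2 * ENNReal.ofReal (nnd ((N:ℝ) * cdf μ y) +
              nnd (((N+1:ℕ):ℝ) * cdf μ y)) := ENNReal.ofReal_mul (by norm_num)
        _ = 2 * (ENNReal.ofReal (nnd ((N:ℝ) * cdf μ y)) +
              ENNReal.ofReal (nnd (((N+1:ℕ):ℝ) * cdf μ y))) := by
            rw [ENNReal.ofReal_add (nnd_nonneg _) (nnd_nonneg _)]
            norm_num
    calc K ≤ ∫⁻ y, 2 * (ENNReal.ofReal (nnd ((N:ℝ) * cdf μ y)) +
          ENNReal.ofReal (nnd (((N+1:ℕ):ℝ) * cdf μ y))) := lintegral_mono hpt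
      _ = 2 * ∫⁻ y, (ENNReal.ofReal (nnd ((N:ℝ) * cdf μ y)) +
          ENNReal.ofReal (nnd (((N+1:ℕ):ℝ) * cdf μ y))) :=
          lintegral_const_mul' _ _ (by simp)
      _ = 2 * ((∫⁻ y, ENNReal.ofReal (nnd ((N:ℝ) * cdf μ y))) +
          ∫⁻ y, ENNReal.ofReal (nnd (((N+1:ℕ):ℝ) * cdf μ y))) := by
          rw [lintegral_add_left hmeasA]
      _ ≤ 2 * T := by
          rw [hT]
          refine mul_le_mul_right (add_le_add ?_ ?_) 2
          · exact hA
          · exact hB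
  have hreal : ∫ y : ℝ, min (cdf μ y) (1 - cdf μ y) = K.toReal := by
    rw [hK, integral_eq_lintegral_of_nonneg_ae]
    · refine Eventually.of_forall (fun y => ?_)
      have h1 := cdf_nonneg μ y
      have h2 := cdf_le_one μ y
      simp only [Pi.zero_apply]
      exact le_min h1 (by linarith)
    · exact ((monotone_cdf μ).measurable.min
        (measurable_const.sub (monotone_cdf μ).measurable)).aestronglyMeasurable
  have h2T : (2 * T).toReal = 2 * T.toReal := by
    rw [ENNReal.toReal_mul]; norm_num
  have hTreal : T.toReal = (N:ℝ) * L.toReal + ((N+1:ℕ):ℝ) * L'.toReal := by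
    rw [hT, ENNReal.toReal_add (ENNReal.mul_ne_top (ENNReal.natCast_ne_top _) hLfin)
      (ENNReal.mul_ne_top (ENNReal.natCast_ne_top _) hL'fin), ENNReal.toReal_mul,
      ENNReal.toReal_mul, ENNReal.toReal_natCast, ENNReal.toReal_natCast]
  have hfinal : K.toReal ≤ 2 * T.toReal := by
    rw [← h2T]
    exact ENNReal.toReal_mono (ENNReal.mul_ne_top (by simp) hTfin) hKbound
  rw [hreal, real_sum_eq μ hmom N hN x, real_sum_eq μ hmom (N+1) (by omega) x', ← hL, ← hL']
  rw [hTreal] at hfinal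
  linarith
end master2

section final
variable (μ : Measure ℝ) [IsProbabilityMeasure μ]
set_option linter.unusedSectionVars false

lemma K_ne_top (hmom : Integrable (fun x : ℝ => |x|) μ) :
    (∫⁻ y, ENNReal.ofReal (min (cdf μ y) (1 - cdf μ y))) ≠ ⊤ := by
  set L : ℝ≥0∞ := ∑ i : Fin 1, ∫⁻ u in Ioc ((i:ℝ)/((1:ℕ):ℝ)) (((i:ℝ)+1)/((1:ℕ):ℝ)),
    ENNReal.ofReal |(0:ℝ) - qf μ u| with hL
  set L' : ℝ≥0∞ := ∑ i : Fin 2, ∫⁻ u in Ioc ((i:ℝ)/((2:ℕ):ℝ)) (((i:ℝ)+1)/((2:ℕ):ℝ)),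
    ENNReal.ofReal |(0:ℝ) - qf μ u| with hL'
  have hLfin : L ≠ ⊤ := lint_sum_finite μ hmom 1 le_rfl (fun _ => 0)
  have hL'fin : L' ≠ ⊤ := lint_sum_finite μ hmom 2 (by omega) (fun _ => 0)
  have hA := keyA μ 1 le_rfl (fun _ => (0:ℝ))
  have hB := keyA μ 2 (by omega) (fun _ => (0:ℝ))
  have hmeasA : Measurable (fun y => ENNReal.ofReal (nnd (((1:ℕ):ℝ) * cdf μ y))) :=
    ENNReal.measurable_ofReal.comp (nnd_measurable.comp
      (measurable_const.mul (monotone_cdf μ).measurable))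
  have hKbound : (∫⁻ y, ENNReal.ofReal (min (cdf μ y) (1 - cdf μ y))) ≤
      2 * (((1:ℕ) : ℝ≥0∞) * L + ((2:ℕ) : ℝ≥0∞) * L') := by
    have hpt : ∀ y : ℝ, ENNReal.ofReal (min (cdf μ y) (1 - cdf μ y)) ≤
        2 * (ENNReal.ofReal (nnd (((1:ℕ):ℝ) * cdf μ y)) +
          ENNReal.ofReal (nnd (((2:ℕ):ℝ) * cdf μ y))) := by
      intro y
      have h := nnd_pair (cdf_nonneg μ y) (cdf_le_one μ y) 1
      have hcast : (((1:ℕ):ℝ) + 1) = ((2:ℕ):ℝ) := by norm_num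
      rw [hcast] at h
      calc ENNReal.ofReal (min (cdf μ y) (1 - cdf μ y))
          ≤ ENNReal.ofReal (2 * (nnd (((1:ℕ):ℝ) * cdf μ y) + nnd (((2:ℕ):ℝ) * cdf μ y))) :=
            ENNReal.ofReal_le_ofReal h
        _ = ENNReal.ofReal 2 * ENNReal.ofReal (nnd (((1:ℕ):ℝ) * cdf μ y) +
              nnd (((2:ℕ):ℝ) * cdf μ y)) := ENNReal.ofReal_mul (by norm_num)
        _ = 2 * (ENNReal.ofReal (nnd (((1:ℕ):ℝ) * cdf μ y)) +
              ENNReal.ofReal (nnd (((2:ℕ):ℝ) * cdf μ y))) := by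
            rw [ENNReal.ofReal_add (nnd_nonneg _) (nnd_nonneg _)]
            norm_num
    calc (∫⁻ y, ENNReal.ofReal (min (cdf μ y) (1 - cdf μ y)))
        ≤ ∫⁻ y, 2 * (ENNReal.ofReal (nnd (((1:ℕ):ℝ) * cdf μ y)) +
            ENNReal.ofReal (nnd (((2:ℕ):ℝ) * cdf μ y))) := lintegral_mono hpt
      _ = 2 * ∫⁻ y, (ENNReal.ofReal (nnd (((1:ℕ):ℝ) * cdf μ y)) +
            ENNReal.ofReal (nnd (((2:ℕ):ℝ) * cdf μ y))) := lintegral_const_mul' _ _ (by simp)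
      _ = 2 * ((∫⁻ y, ENNReal.ofReal (nnd (((1:ℕ):ℝ) * cdf μ y))) +
            ∫⁻ y, ENNReal.ofReal (nnd (((2:ℕ):ℝ) * cdf μ y))) := by
          rw [lintegral_add_left hmeasA]
      _ ≤ 2 * (((1:ℕ) : ℝ≥0∞) * L + ((2:ℕ) : ℝ≥0∞) * L') := by
          refine mul_le_mul_right (add_le_add ?_ ?_) 2
          · exact hA
          · exact hB
  intro htop
  rw [htop] at hKbound
  have : ((2:ℝ≥0∞) * (((1:ℕ) : ℝ≥0∞) * L + ((2:ℕ) : ℝ≥0∞) * L')) ≠ ⊤ := by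
    refine ENNReal.mul_ne_top (by simp) (ENNReal.add_ne_top.2 ⟨?_, ?_⟩) <;>
      exact ENNReal.mul_ne_top (ENNReal.natCast_ne_top _) (by assumption)
  exact this (top_le_iff.mp hKbound)

lemma min_integrable (hmom : Integrable (fun x : ℝ => |x|) μ) :
    Integrable (fun y : ℝ => min (cdf μ y) (1 - cdf μ y)) volume := by
  refine ⟨((monotone_cdf μ).measurable.min
    (measurable_const.sub (monotone_cdf μ).measurable)).aestronglyMeasurable, ?_⟩
  rw [HasFiniteIntegral]
  have heq : ∀ y : ℝ, (‖min (cdf μ y) (1 - cdf μ y)‖₊ : ℝ≥0∞) =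
      ENNReal.ofReal (min (cdf μ y) (1 - cdf μ y)) := by
    intro y
    rw [← enorm_eq_nnnorm, ← ofReal_norm, Real.norm_of_nonneg]
    refine le_min (cdf_nonneg μ y) ?_
    have := cdf_le_one μ y; linarith
  rw [lintegral_congr (fun y => (enorm_eq_nnnorm _).trans (heq y)), lt_top_iff_ne_top]
  exact K_ne_top μ hmom

lemma min_pos (hmom : Integrable (fun x : ℝ => |x|) μ) (hnd : ∀ a : ℝ, μ ≠ Measure.dirac a) :
    0 < ∫ y : ℝ, min (cdf μ y) (1 - cdf μ y) := by
  have hnn : 0 ≤ᵐ[volume] fun y : ℝ => min (cdf μ y) (1 - cdf μ y) := by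
    refine Eventually.of_forall (fun y => ?_)
    have h1 := cdf_nonneg μ y
    have h2 := cdf_le_one μ y
    simp only [Pi.zero_apply]
    exact le_min h1 (by linarith)
  rcases (integral_nonneg_of_ae hnn).lt_or_eq with h | h
  · exact h
  exfalso
  have hae : ∀ᵐ y : ℝ, min (cdf μ y) (1 - cdf μ y) = 0 := by
    have := (integral_eq_zero_iff_of_nonneg_ae hnn (min_integrable μ hmom)).1 h.symm
    filter_upwards [this] with y hy
    exact hy
  set a := qf μ (1/2) with ha
  have hFa : (1/2:ℝ) ≤ cdf μ a := le_cdf_of_qf_le μ (by norm_num) (by norm_num) le_rfl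
  have hbelow : ∀ z, z < a → cdf μ z < 1/2 := by
    intro z hz
    by_contra hcon
    push_neg at hcon
    exact absurd (qf_le_of_le_cdf μ (by norm_num) hcon) (not_le.2 hz)
  have hptfind : ∀ p q : ℝ, p < q → ∃ z ∈ Ioo p q, min (cdf μ z) (1 - cdf μ z) = 0 := by
    intro p q hpq
    have hres : volume.restrict (Ioo p q) ≠ 0 := by
      intro hzero
      have : volume.restrict (Ioo p q) univ = 0 := by rw [hzero]; simp
      rw [Measure.restrict_apply_univ, Real.volume_Ioo] at this
      have : (0:ℝ) < q - p := by linarith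
      simp [ENNReal.ofReal_eq_zero] at *
      linarith
    haveI : (ae (volume.restrict (Ioo p q))).NeBot := ae_neBot.2 hres
    have hh1 : ∀ᵐ z ∂(volume.restrict (Ioo p q)), min (cdf μ z) (1 - cdf μ z) = 0 :=
      ae_restrict_of_ae hae
    have hh2 : ∀ᵐ z ∂(volume.restrict (Ioo p q)), z ∈ Ioo p q :=
      ae_restrict_mem measurableSet_Ioo
    obtain ⟨z, hz0, hz1⟩ := (hh1.and hh2).exists
    exact ⟨z, hz1, hz0⟩
  have hup : ∀ y, a < y → cdf μ y = 1 := by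
    intro y hy
    obtain ⟨z, hz, hmin⟩ := hptfind a y hy
    have h2 : (1/2:ℝ) ≤ cdf μ z := le_trans hFa (monotone_cdf μ hz.1.le)
    have h3 : cdf μ z = 1 := by
      rcases le_total (cdf μ z) (1 - cdf μ z) with hc | hc
      · rw [min_eq_left hc] at hmin; linarith
      · rw [min_eq_right hc] at hmin; linarith
    exact le_antisymm (cdf_le_one μ y) (h3 ▸ monotone_cdf μ hz.2.le)
  have hFa1 : cdf μ a = 1 := by
    have hev : ∀ᶠ y in 𝓝[>] a, (1:ℝ) ≤ cdf μ y := by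
      filter_upwards [self_mem_nhdsWithin] with yy (hyy : a < yy)
      exact (hup yy hyy).ge
    have hc : Tendsto (cdf μ) (𝓝[>] a) (𝓝 (cdf μ a)) :=
      ((cdf μ).right_continuous _).tendsto.mono_left (nhdsWithin_mono _ Ioi_subset_Ici_self)
    exact le_antisymm (cdf_le_one μ a) (ge_of_tendsto hc hev)
  have hdown : ∀ y, y < a → cdf μ y = 0 := by
    intro y hy
    obtain ⟨z, hz, hmin⟩ := hptfind y a hy
    have h2 : cdf μ z < 1/2 := hbelow z hz.2
    have h3 : cdf μ z = 0 := by
      rcases le_total (cdf μ z) (1 - cdf μ z) with hc | hc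
      · rw [min_eq_left hc] at hmin; linarith
      · rw [min_eq_right hc] at hmin; linarith
    exact le_antisymm (h3 ▸ monotone_cdf μ hz.1.le) (cdf_nonneg μ y)
  refine hnd a (Measure.ext_of_Iic μ (Measure.dirac a) (fun y => ?_))
  rw [← ofReal_cdf μ y, Measure.dirac_apply' a measurableSet_Iic]
  rcases le_or_gt a y with hc | hc
  · have h1 : cdf μ y = 1 := by
      rcases hc.lt_or_eq with hlt | heq
      · exact hup y hlt
      · rw [← heq]; exact hFa1
    rw [h1]
    simp [indicator_of_mem, mem_Iic, hc]
  · rw [hdown y hc]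
    simp [indicator_of_notMem, mem_Iic, not_le.2 hc]
end final

/-- Minimal Wasserstein-`ρ` distance between `μ` and empirical measures on `N` points,
expressed through the quantile formula for the Wasserstein distance on `ℝ`. -/
noncomputable def eN (μ : Measure ℝ) (ρ : ℝ) (N : ℕ) : ℝ :=
  sInf ((fun x : Fin N → ℝ =>
      (∑ i : Fin N,
        ∫ u in Set.Ioc ((i : ℝ) / N) (((i : ℝ) + 1) / N), |x i - qf μ u| ^ ρ) ^ (1 / ρ)) ''
    {x : Fin N → ℝ | Monotone x})

section assemble
variable (μ : Measure ℝ) [IsProbabilityMeasure μ]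
set_option linter.unusedSectionVars false

lemma eN_one_eq (N : ℕ) : eN μ 1 N =
    sInf ((fun x : Fin N → ℝ =>
      ∑ i : Fin N, ∫ u in Set.Ioc ((i : ℝ) / N) (((i : ℝ) + 1) / N), |x i - qf μ u|) ''
    {x : Fin N → ℝ | Monotone x}) := by
  rw [eN]
  congr 1
  apply Set.image_congr
  intro x _
  simp only [show ((1:ℝ)/1) = 1 from by norm_num, Real.rpow_one]

lemma conj1 (hmom : Integrable (fun x : ℝ => |x|) μ) (N : ℕ) (hN : 1 ≤ N) :
    (1 / 2) * ∫ y : ℝ, min (cdf μ y) (1 - cdf μ y) ≤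
      (N : ℝ) * eN μ 1 N + ((N : ℝ) + 1) * eN μ 1 (N + 1) := by
  have hNpos : (0:ℝ) < N := by exact_mod_cast hN
  have hN1pos : (0:ℝ) < (N:ℝ) + 1 := by linarith
  set I := ∫ y : ℝ, min (cdf μ y) (1 - cdf μ y) with hI
  set S1 := ((fun x : Fin N → ℝ =>
      ∑ i : Fin N, ∫ u in Set.Ioc ((i : ℝ) / N) (((i : ℝ) + 1) / N), |x i - qf μ u|) ''
    {x : Fin N → ℝ | Monotone x}) with hS1
  set S2 := ((fun x : Fin (N+1) → ℝ =>
      ∑ i : Fin (N+1), ∫ u in Set.Ioc ((i : ℝ) / (N+1:ℕ)) (((i : ℝ) + 1) / (N+1:ℕ)),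
        |x i - qf μ u|) '' {x : Fin (N+1) → ℝ | Monotone x}) with hS2
  have hne1 : S1.Nonempty := ⟨_, ⟨fun _ => (0:ℝ), monotone_const, rfl⟩⟩
  have hne2 : S2.Nonempty := ⟨_, ⟨fun _ => (0:ℝ), monotone_const, rfl⟩⟩
  have hbound : ∀ s1 ∈ S1, ∀ s2 ∈ S2, (1/2) * I ≤ (N:ℝ) * s1 + ((N:ℝ)+1) * s2 := by
    rintro s1 ⟨x, _, rfl⟩ s2 ⟨x', _, rfl⟩
    have h := master μ hmom N hN x x'
    beta_reduce
    push_cast at h ⊢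
    exact h
  rw [eN_one_eq μ N, eN_one_eq μ (N+1), ← hS1, ← hS2]
  have hstep1 : ∀ s1 ∈ S1, ((1/2) * I - (N:ℝ) * s1) / ((N:ℝ)+1) ≤ sInf S2 := by
    intro s1 hs1
    refine le_csInf hne2 (fun s2 hs2 => ?_)
    rw [div_le_iff₀ hN1pos]
    have := hbound s1 hs1 s2 hs2
    nlinarith
  have hstep2 : ((1/2) * I - ((N:ℝ)+1) * sInf S2) / (N:ℝ) ≤ sInf S1 := by
    refine le_csInf hne1 (fun s1 hs1 => ?_)
    rw [div_le_iff₀ hNpos]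
    have h := hstep1 s1 hs1
    rw [div_le_iff₀ hN1pos] at h
    nlinarith
  rw [div_le_iff₀ hNpos] at hstep2
  nlinarith
end assemble

theorem stmt15 (μ : Measure ℝ) [IsProbabilityMeasure μ]
    (hmom : Integrable (fun x : ℝ => |x|) μ) (hnd : ∀ a : ℝ, μ ≠ Measure.dirac a) :
    (∀ N : ℕ, 1 ≤ N →
      (1 / 2) * ∫ x : ℝ, min (cdf μ x) (1 - cdf μ x) ≤
        (N : ℝ) * eN μ 1 N + ((N : ℝ) + 1) * eN μ 1 (N + 1)) ∧
    (0 < ∫ x : ℝ, min (cdf μ x) (1 - cdf μ x)) ∧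
    (∃ c : ℝ, 0 < c ∧ ∃ᶠ N : ℕ in Filter.atTop, c ≤ (N : ℝ) * eN μ 1 N) := by
  have hI := min_pos μ hmom hnd
  refine ⟨fun N hN => conj1 μ hmom N hN, hI, ?_⟩
  refine ⟨(1/4) * ∫ x : ℝ, min (cdf μ x) (1 - cdf μ x), by linarith, ?_⟩
  rw [frequently_atTop]
  intro N₀
  set m := max N₀ 1 with hm
  have hm1 : 1 ≤ m := le_max_right _ _
  have h := conj1 μ hmom m hm1
  set I := ∫ x : ℝ, min (cdf μ x) (1 - cdf μ x) with hIdef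
  rcases le_or_gt ((1/4) * I) ((m:ℝ) * eN μ 1 m) with hc | hc
  · exact ⟨m, le_max_left _ _, hc⟩
  · refine ⟨m + 1, le_trans (le_max_left _ _) (Nat.le_succ m), ?_⟩
    have hcast : (((m+1:ℕ)):ℝ) = (m:ℝ) + 1 := by push_cast; ring
    rw [hcast]
    linarith
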